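/- arXiv:1310.7991 — 2 statements merged into one kernel-verified Lean document; each statement's English description precedes it below -/
import Mathlib

section
/- Let W be an r × n matrix and χ be an r × n matrix with entries in {0,1} such that every nonzero entry of W occurs where χ equals 1. Then the spectral norm satisfies ‖W‖₂ ≤ ‖W‖_∞ · ‖χ‖₂, where ‖W‖_∞ is the maximum absolute value of an entry of W. -/
open Finset

/-- Spectral norm of a matrix, as the operator norm of the induced linear map
between Euclidean spaces. -/
noncomputable def specNorm {r n : ℕ} (W : Matrix (Fin r) (Fin n) ℝ) : ℝ :=
  ‖LinearMap.toContinuousLinearMap (Matrix.toEuclideanLin W)‖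

/-- If `χ` is a 0/1 matrix and every nonzero entry of `W` occurs where `χ = 1`,
then `‖W‖₂ ≤ ‖W‖_∞ · ‖χ‖₂`. -/
theorem stmt5 (r n : ℕ) (W χ : Matrix (Fin r) (Fin n) ℝ)
    (hχ : ∀ p i, χ p i = 0 ∨ χ p i = 1)
    (hsupp : ∀ p i, W p i ≠ 0 → χ p i = 1) :
    specNorm W ≤ (⨆ p, ⨆ i, |W p i|) * specNorm χ := by
  set M := ⨆ p, ⨆ i, |W p i| with hM
  have hM0 : 0 ≤ M := Real.iSup_nonneg fun p => Real.iSup_nonneg fun i => abs_nonneg _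
  have hMle : ∀ p i, |W p i| ≤ M := by
    intro p i
    calc |W p i| ≤ ⨆ i, |W p i| :=
          le_ciSup (f := fun i => |W p i|)
          (Set.Finite.bddAbove (Set.finite_range _)) i
      _ ≤ M := le_ciSup (f := fun p => ⨆ i, |W p i|)
          (Set.Finite.bddAbove (Set.finite_range _)) p
  have hentry : ∀ p i, |W p i| ≤ M * χ p i := by
    intro p i
    by_cases h : W p i = 0
    · rcases hχ p i with h1 | h1 <;> simp [h, h1, hM0]
    · rw [hsupp p i h, mul_one]; exact hMle p i
  unfold specNorm
  apply ContinuousLinearMap.opNorm_le_bound _ (mul_nonneg hM0 (norm_nonneg _))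
  intro x
  set y : EuclideanSpace ℝ (Fin n) := WithLp.toLp 2 (fun i => |x i|) with hy
  have hyx : ‖y‖ = ‖x‖ := by
    simp [EuclideanSpace.norm_eq, hy, sq_abs]
  have key : ‖(Matrix.toEuclideanLin W).toContinuousLinearMap x‖ ≤
      M * ‖(Matrix.toEuclideanLin χ).toContinuousLinearMap y‖ := by
    have h1 : ∀ p : Fin r, abs ((W.mulVec (fun i => x i)) p) ≤ M * (χ.mulVec (fun i => y i)) p := by
      intro p
      calc abs ((W.mulVec (fun i => x i)) p) ≤ ∑ i, |W p i * x i| := by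
            simpa [Matrix.mulVec, dotProduct] using
              Finset.abs_sum_le_sum_abs (fun i => W p i * x i) Finset.univ
        _ ≤ ∑ i, M * (χ p i * y i) := by
            apply Finset.sum_le_sum
            intro i _
            rw [abs_mul]
            calc |W p i| * |x i| ≤ (M * χ p i) * |x i| :=
                  mul_le_mul_of_nonneg_right (hentry p i) (abs_nonneg _)
              _ = M * (χ p i * y i) := by rw [hy]; ring
        _ = M * (χ.mulVec (fun i => y i)) p := by
            simp [Matrix.mulVec, dotProduct, Finset.mul_sum]
    have h2 : ‖(Matrix.toEuclideanLin W).toContinuousLinearMap x‖ ^ 2 ≤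
        (M * ‖(Matrix.toEuclideanLin χ).toContinuousLinearMap y‖) ^ 2 := by
      have e1 : ‖(Matrix.toEuclideanLin W).toContinuousLinearMap x‖ ^ 2 =
          ∑ p, ((W.mulVec (fun i => x i)) p) ^ 2 := by
        have := EuclideanSpace.norm_eq ((Matrix.toEuclideanLin W).toContinuousLinearMap x)
        rw [this, Real.sq_sqrt (Finset.sum_nonneg fun p _ => sq_nonneg _)]
        simp only [Real.norm_eq_abs, sq_abs]
        rfl
      have e2 : ‖(Matrix.toEuclideanLin χ).toContinuousLinearMap y‖ ^ 2 =
          ∑ p, ((χ.mulVec (fun i => y i)) p) ^ 2 := by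
        have := EuclideanSpace.norm_eq ((Matrix.toEuclideanLin χ).toContinuousLinearMap y)
        rw [this, Real.sq_sqrt (Finset.sum_nonneg fun p _ => sq_nonneg _)]
        simp only [Real.norm_eq_abs, sq_abs]
        rfl
      rw [e1, mul_pow, e2, Finset.mul_sum]
      apply Finset.sum_le_sum
      intro p _
      rw [← mul_pow]
      have := h1 p
      have h3 : 0 ≤ M * (χ.mulVec (fun i => y i)) p := le_trans (abs_nonneg _) this
      calc ((W.mulVec (fun i => x i)) p) ^ 2 = abs ((W.mulVec (fun i => x i)) p) ^ 2 := (sq_abs _).symm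
        _ ≤ (M * (χ.mulVec (fun i => y i)) p) ^ 2 :=
            pow_le_pow_left₀ (abs_nonneg _) this 2
    have h4 : 0 ≤ M * ‖(Matrix.toEuclideanLin χ).toContinuousLinearMap y‖ :=
      mul_nonneg hM0 (norm_nonneg _)
    nlinarith [norm_nonneg ((Matrix.toEuclideanLin W).toContinuousLinearMap x)]
  calc ‖(Matrix.toEuclideanLin W).toContinuousLinearMap x‖
      ≤ M * ‖(Matrix.toEuclideanLin χ).toContinuousLinearMap y‖ := key
    _ ≤ M * (‖(Matrix.toEuclideanLin χ).toContinuousLinearMap‖ * ‖y‖) :=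
        mul_le_mul_of_nonneg_left (ContinuousLinearMap.le_opNorm _ _) hM0
    _ = M * ‖(Matrix.toEuclideanLin χ).toContinuousLinearMap‖ * ‖x‖ := by
        rw [hyx]; ring
end

section
/- Let X be an r×n matrix such that X Xᵀ is invertible with ‖(X Xᵀ)⁻¹‖₂ ≤ 8r/(ns), and such that the first diagonal entry satisfies X¹(X¹)ᵀ ≥ ns/(8r) (where X¹ denotes the first row of X), and suppose ‖X_{∖1}(X¹)ᵀ‖₂ ≤ 5s²n/r^{3/2} where X_{∖1} is X with the first row removed. Then the off-diagonal part of the first column of (X Xᵀ)⁻¹ satisfies ‖((X Xᵀ)⁻¹)_{∖1,1}‖₂ ≤ 320√r/n. -/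
open Finset Matrix

lemma specNorm_mulVec_le {k l : ℕ} (W : Matrix (Fin k) (Fin l) ℝ) (u : Fin l → ℝ) :
    Real.sqrt (∑ j, ((W *ᵥ u) j) ^ 2) ≤ specNorm W * Real.sqrt (∑ i, u i ^ 2) := by
  have h := (LinearMap.toContinuousLinearMap (Matrix.toEuclideanLin W)).le_opNorm
    ((WithLp.equiv 2 (Fin l → ℝ)).symm u)
  simp only [LinearMap.coe_toContinuousLinearMap', WithLp.equiv_symm_apply, Matrix.toEuclideanLin_apply_piLp_toLp] at h
  rw [EuclideanSpace.norm_eq, EuclideanSpace.norm_eq] at h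
  simpa [Real.norm_eq_abs, sq_abs, specNorm] using h

/-- Off-diagonal first column of `(XXᵀ)⁻¹`: under the stated bounds,
`‖((XXᵀ)⁻¹)_{∖1,1}‖₂ ≤ 320√r/n`. -/
theorem stmt13 (m N : ℕ) (r s n : ℝ) (hr : 0 < r) (hs : 0 < s) (hn : 0 < n)
    (X : Matrix (Fin (m + 1)) (Fin N) ℝ)
    (hdet : IsUnit (X * Xᵀ).det)
    (hinv : specNorm ((X * Xᵀ)⁻¹) ≤ 8 * r / (n * s))
    (hdiag : n * s / (8 * r) ≤ ∑ i, X 0 i * X 0 i)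
    (hcross : Real.sqrt (∑ q : Fin m, (∑ i, X q.succ i * X 0 i) ^ 2) ≤
      5 * s ^ 2 * n / r ^ ((3 : ℝ) / 2)) :
    Real.sqrt (∑ q : Fin m, ((X * Xᵀ)⁻¹ q.succ 0) ^ 2) ≤ 320 * Real.sqrt r / n := by
  set A := X * Xᵀ with hA
  set M := A⁻¹ with hM
  set a : ℝ := ∑ i, X 0 i * X 0 i with ha
  set c : Fin m → ℝ := fun p => ∑ i, X p.succ i * X 0 i with hc
  have hApos : 0 < a := lt_of_lt_of_le (by positivity) hdiag
  have hAcol : ∀ j, A j 0 = ∑ i, X j i * X 0 i := by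
    intro j; simp [hA, Matrix.mul_apply, Matrix.transpose_apply]
  set w : Fin (m + 1) → ℝ := Fin.cons 0 c with hw
  have hMA : M * A = 1 := Matrix.nonsing_inv_mul A hdet
  have hkey : ∀ q : Fin m, M q.succ 0 * a = -((M *ᵥ w) q.succ) := by
    intro q
    have h0 : (M * A) q.succ 0 = (1 : Matrix (Fin (m+1)) (Fin (m+1)) ℝ) q.succ 0 := by
      rw [hMA]
    rw [Matrix.mul_apply, Matrix.one_apply_ne (Fin.succ_ne_zero q)] at h0
    rw [Fin.sum_univ_succ] at h0
    have hmv : (M *ᵥ w) q.succ = ∑ p : Fin m, M q.succ p.succ * c p := by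
      simp [Matrix.mulVec, dotProduct, Fin.sum_univ_succ, hw]
    rw [hmv]
    have h00 : A 0 0 = a := by rw [hAcol]
    rw [h00] at h0
    have hcp : ∀ p : Fin m, A p.succ 0 = c p := fun p => hAcol p.succ
    simp only [hcp] at h0
    linarith
  have hsq : ∀ q : Fin m, (M q.succ 0) ^ 2 = ((M *ᵥ w) q.succ) ^ 2 / a ^ 2 := by
    intro q
    rw [eq_div_iff (by positivity : a ^ 2 ≠ 0)]
    calc (M q.succ 0) ^ 2 * a ^ 2 = (M q.succ 0 * a) ^ 2 := by ring
      _ = (-((M *ᵥ w) q.succ)) ^ 2 := by rw [hkey q]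
      _ = ((M *ᵥ w) q.succ) ^ 2 := by ring
  have hstep1 : ∑ q : Fin m, (M q.succ 0) ^ 2 ≤ (∑ j, ((M *ᵥ w) j) ^ 2) / a ^ 2 := by
    have heq : ∑ q : Fin m, (M q.succ 0) ^ 2
        = (∑ q : Fin m, ((M *ᵥ w) q.succ) ^ 2) / a ^ 2 := by
      rw [Finset.sum_div]; exact Finset.sum_congr rfl fun q _ => hsq q
    rw [heq, Fin.sum_univ_succ]
    gcongr
    exact le_add_of_nonneg_left (sq_nonneg _)
  have hwsum : ∑ j, w j ^ 2 = ∑ p : Fin m, c p ^ 2 := by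
    simp [hw, Fin.sum_univ_succ]
  -- main chain
  have hKnn : (0:ℝ) ≤ 8 * r / (n * s) := by positivity
  have hLnn : (0:ℝ) ≤ 5 * s ^ 2 * n / r ^ ((3:ℝ)/2) := by positivity
  have hinva : 1 / a ≤ 8 * r / (n * s) := by
    rw [div_le_div_iff₀ hApos (by positivity)]
    have h8 : (0:ℝ) < 8 * r := by positivity
    rw [div_le_iff₀ h8] at hdiag
    nlinarith
  have hcnn : (0:ℝ) ≤ Real.sqrt (∑ p : Fin m, c p ^ 2) := Real.sqrt_nonneg _
  have hMnn : (0:ℝ) ≤ specNorm M := norm_nonneg _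
  calc Real.sqrt (∑ q : Fin m, (M q.succ 0) ^ 2)
      ≤ Real.sqrt ((∑ j, ((M *ᵥ w) j) ^ 2) / a ^ 2) := Real.sqrt_le_sqrt hstep1
    _ = Real.sqrt (∑ j, ((M *ᵥ w) j) ^ 2) / a := by
        rw [Real.sqrt_div (by positivity), Real.sqrt_sq hApos.le]
    _ ≤ (1 / a) * (specNorm M * Real.sqrt (∑ p : Fin m, c p ^ 2)) := by
        rw [div_eq_mul_one_div, mul_comm]
        apply mul_le_mul_of_nonneg_left _ (by positivity)
        rw [← hwsum]; exact specNorm_mulVec_le M w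
    _ ≤ (8 * r / (n * s)) * ((8 * r / (n * s)) * (5 * s ^ 2 * n / r ^ ((3:ℝ)/2))) := by
        apply mul_le_mul hinva _ (by positivity) hKnn
        exact mul_le_mul hinv hcross hcnn hKnn
    _ = 320 * Real.sqrt r / n := by
        have h32 : r ^ ((3:ℝ)/2) * r ^ ((1:ℝ)/2) = r * r := by
          rw [← Real.rpow_add hr, show ((3:ℝ)/2 + 1/2) = ((2:ℕ):ℝ) by norm_num,
            Real.rpow_natCast]
          ring
        rw [Real.sqrt_eq_rpow]
        have h1 : r ^ ((3:ℝ)/2) ≠ 0 := by positivity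
        field_simp
        linear_combination (-320) * h32
end
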